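/- Let X be a category and let F, G : X ⥤ Type u be functors. The map sending a natural transformation α : F ⟶ G to the functor Elements F ⥤ Elements G given on objects by (x, s) ↦ (x, α.app x s) and acting as the identity on underlying morphisms of X, is a bijection from the set of natural transformations F ⟶ G to the set of functors H : Elements F ⥤ Elements G satisfying π_G ∘ H = π_F. (In the language of the paper: the forgetful functor from pointed sets to sets is a classifying discrete opfibration for CAT, i.e. the Grothendieck-construction functor from CAT(X, Set) to discrete opfibrations over X is fully faithful.) -/

import Mathlib

open CategoryTheory

universe w v u

lemma eqToHom_val_aux {X : Type v} [Category.{w} X] {G : X ⥤ Type u}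
    {p q : G.Elements} (h : p = q) :
    (eqToHom h).val = eqToHom (congrArg Sigma.fst h) := by
  subst h; rfl

/-- For functors `F, G : X ⥤ Type u`, the assignment sending a natural
transformation `α : F ⟶ G` to the induced functor `Elements F ⥤ Elements G` over `X`
(given by `(x, s) ↦ (x, α.app x s)` and the identity on underlying morphisms) is a
bijection onto the set of functors `H : Elements F ⥤ Elements G` with
`H ⋙ π_G = π_F`.  (The forgetful functor from pointed sets is a classifying discrete
opfibration: the Grothendieck construction is fully faithful.) -/
theorem stmt12 {X : Type v} [Category.{w} X] (F G : X ⥤ Type u) :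
    Function.Bijective
      (fun α : F ⟶ G =>
        (⟨CategoryOfElements.map α, CategoryOfElements.map_π α⟩ :
          {H : F.Elements ⥤ G.Elements //
            H ⋙ CategoryOfElements.π G = CategoryOfElements.π F})) := by
  constructor
  · intro α β h
    ext x s
    have h1 := Functor.congr_obj (congrArg Subtype.val h) ⟨x, s⟩
    have h2 : (Sigma.mk x (α.app x s) : Σ c, G.obj c) = ⟨x, β.app x s⟩ := h1
    exact eq_of_heq (Sigma.mk.inj_iff.mp h2).2
  · rintro ⟨H, hH⟩
    have hobj : ∀ p : F.Elements, (H.obj p).1 = p.1 := fun p =>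
      Functor.congr_obj hH p
    have hmap : ∀ {p q : F.Elements} (f : p ⟶ q),
        (H.map f).val = eqToHom (hobj p) ≫ f.val ≫ eqToHom (hobj q).symm := by
      intro p q f
      have := Functor.congr_hom hH f
      simp [eqToHom_map] at this
      exact this
    refine ⟨{ app := fun x => TypeCat.ofHom fun s => G.map (eqToHom (hobj (F.elementsMk x s))) (H.obj (F.elementsMk x s)).2
              naturality := ?_ }, ?_⟩
    · intro x y u
      refine ConcreteCategory.hom_ext _ _ fun s => ?_
      have h1 := (H.map (CategoryOfElements.homMk (F.elementsMk x s)
        (F.elementsMk y (F.map u s)) u rfl)).property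
      rw [hmap] at h1
      simp only [types_comp_apply, FunctorToTypes.map_comp_apply,
        CategoryOfElements.homMk_coe, TypeCat.ofHom_apply] at h1 ⊢
      rw [← h1]
      simp
    · apply Subtype.ext
      show CategoryOfElements.map _ = H
      symm
      apply CategoryTheory.Functor.ext
      case h_obj =>
        intro p
        obtain ⟨x, s⟩ := p
        refine Functor.Elements.ext _ _ (hobj ⟨x, s⟩) ?_
        simp [CategoryOfElements.map]
        rfl
      case h_map =>
        intro p q f
        apply CategoryOfElements.ext
        rw [hmap f]
        simp [eqToHom_val_aux]
        simp only [CategoryOfElements.map]
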